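/- Setting ε_i = 1/(2^(25+2i)·t(i)^(1/2)) where t is the tower function, one has lim_{i→∞} (log* ε_i^(-2))/i = 1, and consequently t(i)/4 = Ω(ε_i^(-2)/2^(5·log* ε_i^(-2))). -/

import Mathlib

def tower : ℕ → ℕ
  | 0 => 1
  | n+1 => 2 ^ tower n

/-- The iterated logarithm: the number of times `log₂` must be applied to `x`
to obtain a value at most `1`. -/
noncomputable def logStar (x : ℝ) : ℕ := sInf {n : ℕ | (Real.logb 2)^[n] x ≤ 1}

noncomputable def epsSeq (i : ℕ) : ℝ := 1 / (2^(25 + 2*i) * Real.sqrt (tower i))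

lemma tower_pos (n : ℕ) : 0 < tower n := by
  cases n with
  | zero => simp [tower]
  | succ n => simp [tower]

lemma tower_ge (n : ℕ) : n + 1 ≤ tower n := by
  induction n with
  | zero => simp [tower]
  | succ n ih =>
    have h : tower n < 2 ^ tower n := Nat.lt_two_pow_self
    simp only [tower] at *
    omega

lemma logb_two_pow (m : ℕ) : Real.logb 2 ((2:ℝ)^m) = m := by
  rw [Real.logb_pow, Real.logb_self_eq_one (by norm_num)]
  ring

lemma iter_tower (m : ℕ) : ∀ n, m ≤ n → (Real.logb 2)^[m] ((tower n : ℕ) : ℝ) = tower (n - m) := by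
  induction m with
  | zero => intro n _; simp
  | succ m ih =>
    intro n hm
    obtain ⟨k, rfl⟩ : ∃ k, n = k + 1 := ⟨n - 1, by omega⟩
    rw [Function.iterate_succ_apply]
    have h1 : ((tower (k+1) : ℕ) : ℝ) = (2:ℝ) ^ tower k := by
      show ((2 ^ tower k : ℕ) : ℝ) = (2:ℝ) ^ tower k
      push_cast; ring
    rw [h1, logb_two_pow, ih k (by omega)]
    have h2 : k + 1 - (m + 1) = k - m := by omega
    rw [h2]

lemma iterChain (n : ℕ) (x y : ℝ) (hx : 1 ≤ x) (hxy : x ≤ y) :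
    (∃ m ≤ n, (Real.logb 2)^[m] x ≤ 1) ∨
    (1 < (Real.logb 2)^[n] x ∧ (Real.logb 2)^[n] x ≤ (Real.logb 2)^[n] y) := by
  induction n with
  | zero =>
    by_cases h : x ≤ 1
    · exact Or.inl ⟨0, le_refl 0, h⟩
    · exact Or.inr ⟨lt_of_not_ge h, hxy⟩
  | succ n ih =>
    rcases ih with ⟨m, hm, h⟩ | ⟨h1, h2⟩
    · exact Or.inl ⟨m, by omega, h⟩
    · have hlog : Real.logb 2 ((Real.logb 2)^[n] x) ≤ Real.logb 2 ((Real.logb 2)^[n] y) :=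
        Real.logb_le_logb_of_le (by norm_num) (by linarith) h2
      by_cases h : Real.logb 2 ((Real.logb 2)^[n] x) ≤ 1
      · exact Or.inl ⟨n+1, le_refl _, by rwa [Function.iterate_succ_apply']⟩
      · refine Or.inr ⟨?_, ?_⟩ <;> rw [Function.iterate_succ_apply']
        · exact lt_of_not_ge h
        · rw [Function.iterate_succ_apply']; exact hlog

lemma five_m (m : ℕ) (hm : 9 ≤ m) : 5*m + 54 ≤ 2^m := by
  induction m, hm using Nat.le_induction with
  | base => norm_num
  | succ m hm ih =>
    have : 5 ≤ 2^m := le_trans (by norm_num) ih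
    have h2 : 2^(m+1) = 2^m + 2^m := by ring
    omega

lemma xle (i : ℕ) (hi : 11 ≤ i) : 2^(50+4*i) * tower i ≤ tower (i+1) := by
  obtain ⟨j, rfl⟩ : ∃ j, i = j + 1 := ⟨i - 1, by omega⟩
  have h1 : j + 1 ≤ tower j := tower_ge j
  have h2 : 5 * tower j + 54 ≤ 2 ^ tower j := five_m (tower j) (by omega)
  show 2^(50+4*(j+1)) * 2^(tower j) ≤ 2^(2^(tower j))
  rw [← pow_add]
  apply Nat.pow_le_pow_right (by norm_num)
  omega

lemma eps_val (i : ℕ) : (epsSeq i)^(-2:ℤ) = (2:ℝ)^(50+4*i) * (tower i : ℝ) := by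
  have h0 : (0:ℝ) < (tower i : ℝ) := by exact_mod_cast tower_pos i
  have hs : (0:ℝ) < Real.sqrt (tower i) := Real.sqrt_pos.mpr h0
  have hs2 : Real.sqrt (tower i) * Real.sqrt (tower i) = (tower i : ℝ) :=
    Real.mul_self_sqrt h0.le
  have h1 : epsSeq i ^ (-2:ℤ) = (epsSeq i ^ 2)⁻¹ := by
    rw [zpow_neg, zpow_two, ← sq]
  have he : (25 + 2*i) * 2 = 50 + 4*i := by ring
  rw [h1, epsSeq, div_pow, one_pow, mul_pow, ← pow_mul, sq, hs2, one_div, inv_inv, he]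

lemma logStar_bounds (i : ℕ) (hi : 11 ≤ i) :
    i ≤ logStar ((epsSeq i)^(-2:ℤ)) ∧ logStar ((epsSeq i)^(-2:ℤ)) ≤ i + 1 := by
  set x : ℝ := (epsSeq i)^(-2:ℤ) with hxdef
  have hxval : x = (2:ℝ)^(50+4*i) * (tower i : ℝ) := eps_val i
  have ht1 : (1:ℝ) ≤ (tower i : ℝ) := by exact_mod_cast tower_pos i
  have h2p : (1:ℝ) ≤ (2:ℝ)^(50+4*i) := one_le_pow₀ (by norm_num)
  have h1x : (1:ℝ) ≤ x := by rw [hxval]; nlinarith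
  have hxlow : (tower i : ℝ) ≤ x := by rw [hxval]; nlinarith
  have hxhigh : x ≤ (tower (i+1) : ℝ) := by
    rw [hxval]
    have := xle i hi
    calc (2:ℝ)^(50+4*i) * (tower i : ℝ) = ((2^(50+4*i) * tower i : ℕ) : ℝ) := by push_cast; ring
    _ ≤ (tower (i+1) : ℝ) := by exact_mod_cast this
  -- upper bound
  have hup : ∃ m ≤ i + 1, (Real.logb 2)^[m] x ≤ 1 := by
    rcases iterChain (i+1) x (tower (i+1)) h1x hxhigh with h | ⟨h1, h2⟩
    · exact h
    · exfalso
      rw [iter_tower (i+1) (i+1) le_rfl] at h2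
      have h3 : ((tower ((i+1)-(i+1)) : ℕ) : ℝ) = 1 := by simp [tower]
      rw [h3] at h2
      linarith
  obtain ⟨m, hm, hmem⟩ := hup
  have hnonempty : {n : ℕ | (Real.logb 2)^[n] x ≤ 1}.Nonempty := ⟨m, hmem⟩
  have hupper : logStar x ≤ i + 1 := le_trans (Nat.sInf_le hmem) hm
  have key : ∀ m, m < i → ¬ ((Real.logb 2)^[m] x ≤ 1) := by
    intro m hm
    rcases iterChain m (tower i) x ht1 hxlow with ⟨k, hk, h⟩ | ⟨h1, h2⟩
    · exfalso
      rw [iter_tower k i (by omega)] at h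
      have : i - k + 1 ≤ tower (i - k) := tower_ge (i - k)
      have h2 : (2:ℝ) ≤ (tower (i-k) : ℝ) := by
        have : 2 ≤ tower (i - k) := by omega
        exact_mod_cast this
      linarith
    · linarith
  have hmem' := Nat.sInf_mem hnonempty
  have hlower : i ≤ logStar x := by
    by_contra h
    exact key (logStar x) (by omega) hmem'
  exact ⟨hlower, hupper⟩

theorem stmt16 :
    Filter.Tendsto (fun i : ℕ => (logStar ((epsSeq i)^(-2:ℤ)) : ℝ) / i)
      Filter.atTop (nhds 1) ∧
    ∃ C : ℝ, 0 < C ∧ ∀ᶠ i in Filter.atTop,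
      C * ((epsSeq i)^(-2:ℤ) / 2^(5 * logStar ((epsSeq i)^(-2:ℤ)))) ≤ (tower i : ℝ) / 4 := by
  constructor
  · have hg : Filter.Tendsto (fun i : ℕ => (1:ℝ)) Filter.atTop (nhds 1) :=
      tendsto_const_nhds
    have hh : Filter.Tendsto (fun i : ℕ => 1 + (i:ℝ)⁻¹) Filter.atTop (nhds 1) := by
      have := tendsto_inv_atTop_nhds_zero_nat (𝕜 := ℝ)
      have h := Filter.Tendsto.const_add (1:ℝ) this
      simpa using h
    apply tendsto_of_tendsto_of_tendsto_of_le_of_le' hg hh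
    · filter_upwards [Filter.eventually_ge_atTop 11] with i hi
      have hb := (logStar_bounds i hi).1
      have hip : (0:ℝ) < (i:ℝ) := by positivity
      rw [le_div_iff₀ hip, one_mul]
      exact_mod_cast hb
    · filter_upwards [Filter.eventually_ge_atTop 11] with i hi
      have hb := (logStar_bounds i hi).2
      have hip : (0:ℝ) < (i:ℝ) := by positivity
      rw [div_le_iff₀ hip]
      have : (logStar ((epsSeq i)^(-2:ℤ)) : ℝ) ≤ (i:ℝ) + 1 := by exact_mod_cast hb
      have hinv : (1 + (i:ℝ)⁻¹) * i = i + 1 := by field_simp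
      linarith [this, hinv.ge]
  · refine ⟨1, one_pos, ?_⟩
    filter_upwards [Filter.eventually_ge_atTop 60] with i hi
    have hb := (logStar_bounds i (by omega)).1
    set S : ℕ := logStar ((epsSeq i)^(-2:ℤ)) with hS
    have hxval := eps_val i
    rw [one_mul, hxval]
    have ht0 : (0:ℝ) ≤ (tower i : ℝ) := by positivity
    have hden : (0:ℝ) < (2:ℝ)^(5 * S) := by positivity
    have hden2 : (0:ℝ) < (2:ℝ)^(5 * i) := by positivity
    have hpow : (2:ℝ)^(5*i) ≤ (2:ℝ)^(5 * S) :=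
      pow_le_pow_right₀ (by norm_num) (by omega)
    have step1 : (2:ℝ)^(50+4*i) * (tower i : ℝ) / (2:ℝ)^(5 * S)
        ≤ (2:ℝ)^(50+4*i) * (tower i : ℝ) / (2:ℝ)^(5*i) := by
      apply div_le_div_of_nonneg_left _ hden2 hpow
      positivity
    have hkey : (4:ℝ) * (2:ℝ)^(50+4*i) ≤ (2:ℝ)^(5*i) := by
      have : (4:ℝ) * (2:ℝ)^(50+4*i) = (2:ℝ)^(52+4*i) := by
        rw [show (4:ℝ) = 2^2 by norm_num, ← pow_add]; congr 1; omega
      rw [this]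
      exact pow_le_pow_right₀ (by norm_num) (by omega)
    have step2 : (2:ℝ)^(50+4*i) * (tower i : ℝ) / (2:ℝ)^(5*i) ≤ (tower i : ℝ) / 4 := by
      rw [div_le_div_iff₀ hden2 (by norm_num)]
      nlinarith
    linarith
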